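/- Let X and Y be Hilbert spaces, T : X → Y a bounded linear operator with a least-squares projection approximation {(X_n, T_n)}. Then the following are equivalent: (i) s-lim_{n→∞} P_{N(T_n)} = P_{N(T)} (strong operator convergence); (ii) s-lim_{n→∞} P_{N(T) ∩ X_n} = P_{N(T)}; (iii) the LPA has kernel approximability, i.e., N(T) = {x ∈ X : dist(x, N(T) ∩ X_n) → 0 as n → ∞}. -/

import Mathlib

open Filter Topology Metric Submodule ContinuousLinearMap

/-- Orthogonal projection onto a subspace `K` (as an operator `H →L[ℝ] H`),
defined whenever `K` admits orthogonal projections (e.g. `K` closed). -/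
noncomputable def orthProj {H : Type*} [NormedAddCommGroup H] [InnerProductSpace ℝ H]
    (K : Submodule ℝ H) : H →L[ℝ] H :=
  open scoped Classical in
  if h : HasOrthogonalProjection K then
    haveI := h
    K.subtypeL.comp (orthogonalProjection K)
  else 0

section Aux

variable {H : Type*} [NormedAddCommGroup H] [InnerProductSpace ℝ H]

lemma orthProj_apply (K : Submodule ℝ H) [h : HasOrthogonalProjection K] (x : H) :
    orthProj K x = (orthogonalProjection K x : H) := by
  rw [orthProj, dif_pos h]; rfl

lemma orthProj_mem (K : Submodule ℝ H) [HasOrthogonalProjection K] (x : H) :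
    orthProj K x ∈ K := by
  rw [orthProj_apply]; exact (orthogonalProjection K x).2

lemma sub_orthProj_mem (K : Submodule ℝ H) [HasOrthogonalProjection K] (x : H) :
    x - orthProj K x ∈ Kᗮ := by
  rw [orthProj_apply]; exact Submodule.sub_starProjection_mem_orthogonal (K := K) x

lemma orthProj_eq_of (K : Submodule ℝ H) [HasOrthogonalProjection K] {x v : H}
    (hv : v ∈ K) (h : x - v ∈ Kᗮ) : orthProj K x = v := by
  rw [orthProj_apply]; exact Submodule.eq_starProjection_of_mem_orthogonal hv h

lemma orthProj_eq_self (K : Submodule ℝ H) [HasOrthogonalProjection K] {x : H}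
    (hx : x ∈ K) : orthProj K x = x :=
  orthProj_eq_of K hx (by simp)

lemma orthProj_eq_zero (K : Submodule ℝ H) [HasOrthogonalProjection K] {x : H}
    (hx : x ∈ Kᗮ) : orthProj K x = 0 :=
  orthProj_eq_of K (zero_mem K) (by simpa using hx)

lemma norm_sub_orthProj_eq_infDist (K : Submodule ℝ H) [HasOrthogonalProjection K] (x : H) :
    ‖x - orthProj K x‖ = Metric.infDist x (K : Set H) := by
  rw [orthProj_apply, show ((orthogonalProjection K x : H)) = K.starProjection x from rfl,
    Submodule.starProjection_minimal, Metric.infDist_eq_iInf]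
  congr 1
  funext y
  rw [dist_eq_norm]

end Aux

variable {X Y : Type*} [NormedAddCommGroup X] [InnerProductSpace ℝ X] [CompleteSpace X]
  [NormedAddCommGroup Y] [InnerProductSpace ℝ Y] [CompleteSpace Y]

/-- Equivalence of `s-lim P_{N(Tₙ)} = P_{N(T)}`, `s-lim P_{N(T)∩Xₙ} = P_{N(T)}`,
and kernel approximability. -/
theorem stmt8
    (T : X →L[ℝ] Y) (Xn : ℕ → Submodule ℝ X)
    (hfin : ∀ n, FiniteDimensional ℝ (Xn n))
    (hinf : ¬ FiniteDimensional ℝ X)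
    (hproj : ∀ x : X, Tendsto (fun n => orthProj (Xn n) x) atTop (𝓝 x))
    (Tn : ℕ → X →L[ℝ] Y) (hTn : ∀ n, Tn n = T.comp (orthProj (Xn n))) :
    ((∀ x : X, Tendsto (fun n => orthProj (LinearMap.ker (Tn n : X →ₗ[ℝ] Y)) x) atTop
        (𝓝 (orthProj (LinearMap.ker (T : X →ₗ[ℝ] Y)) x)))
      ↔ (∀ x : X, Tendsto (fun n => orthProj (LinearMap.ker (T : X →ₗ[ℝ] Y) ⊓ Xn n) x) atTop
        (𝓝 (orthProj (LinearMap.ker (T : X →ₗ[ℝ] Y)) x)))) ∧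
    ((∀ x : X, Tendsto (fun n => orthProj (LinearMap.ker (T : X →ₗ[ℝ] Y) ⊓ Xn n) x) atTop
        (𝓝 (orthProj (LinearMap.ker (T : X →ₗ[ℝ] Y)) x)))
      ↔ (∀ x : X, x ∈ LinearMap.ker (T : X →ₗ[ℝ] Y) ↔
      Tendsto (fun n => Metric.infDist x ((LinearMap.ker (T : X →ₗ[ℝ] Y) ⊓ Xn n : Submodule ℝ X) : Set X))
        atTop (𝓝 0))) := by
  set M := LinearMap.ker (T : X →ₗ[ℝ] Y) with hM
  haveI hMc : CompleteSpace M := (ContinuousLinearMap.isClosed_ker T).completeSpace_coe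
  haveI hXnp : ∀ n, HasOrthogonalProjection (Xn n) := fun n => by
    haveI := hfin n; infer_instance
  haveI hMnp : ∀ n, HasOrthogonalProjection (M ⊓ Xn n) := fun n => by
    haveI := hfin n
    haveI : FiniteDimensional ℝ (M ⊓ Xn n : Submodule ℝ X) :=
      Submodule.finiteDimensional_of_le inf_le_right
    infer_instance
  haveI hKnp : ∀ n, HasOrthogonalProjection (LinearMap.ker (Tn n : X →ₗ[ℝ] Y)) := fun n => by
    haveI : CompleteSpace (LinearMap.ker (Tn n : X →ₗ[ℝ] Y)) :=
      (ContinuousLinearMap.isClosed_ker (Tn n)).completeSpace_coe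
    infer_instance
  -- key decomposition : P_{ker Tn} x = P_{M ⊓ Xn} x + (x - P_{Xn} x)
  have key : ∀ n (x : X), orthProj (LinearMap.ker (Tn n : X →ₗ[ℝ] Y)) x
      = orthProj (M ⊓ Xn n) x + (x - orthProj (Xn n) x) := by
    intro n x
    haveI := hXnp n; haveI := hMnp n; haveI := hKnp n
    set q := orthProj (M ⊓ Xn n) x with hq
    have hqM : q ∈ M := (orthProj_mem (M ⊓ Xn n) x).1
    have hqX : q ∈ Xn n := (orthProj_mem (M ⊓ Xn n) x).2
    have hpx : orthProj (Xn n) x ∈ Xn n := orthProj_mem (Xn n) x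
    have hxpx : x - orthProj (Xn n) x ∈ (Xn n)ᗮ := sub_orthProj_mem (Xn n) x
    apply orthProj_eq_of
    · -- membership in ker (Tn n)
      rw [LinearMap.mem_ker, hTn n]
      have h1 : orthProj (Xn n) (q + (x - orthProj (Xn n) x)) = q := by
        rw [map_add, orthProj_eq_self (Xn n) hqX, orthProj_eq_zero (Xn n) hxpx, add_zero]
      simp only [ContinuousLinearMap.coe_coe, ContinuousLinearMap.comp_apply, h1]
      exact hqM
    · -- orthogonality to ker (Tn n)
      have hxp : x - (q + (x - orthProj (Xn n) x)) = orthProj (Xn n) x - q := by abel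
      rw [hxp, Submodule.mem_orthogonal]
      intro w hw
      have hwk : T (orthProj (Xn n) w) = 0 := by
        have := hw; rw [LinearMap.mem_ker, hTn n] at this; exact this
      have hPw : orthProj (Xn n) w ∈ M ⊓ Xn n :=
        ⟨hwk, orthProj_mem (Xn n) w⟩
      have hsplit : w = orthProj (Xn n) w + (w - orthProj (Xn n) w) := by abel
      rw [real_inner_comm]
      calc inner ℝ (orthProj (Xn n) x - q) w
          = inner ℝ (orthProj (Xn n) x - q) (orthProj (Xn n) w)
            + inner ℝ (orthProj (Xn n) x - q) (w - orthProj (Xn n) w) := by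
            rw [← inner_add_right, ← hsplit]
        _ = (0 : ℝ) := by
            have e1 : inner ℝ (orthProj (Xn n) x - q) (orthProj (Xn n) w) = (0 : ℝ) := by
              have d : orthProj (Xn n) x - q = (x - q) - (x - orthProj (Xn n) x) := by abel
              rw [d, inner_sub_left]
              have t1 : inner ℝ (x - q) (orthProj (Xn n) w) = (0 : ℝ) := by
                have hxq : x - q ∈ (M ⊓ Xn n)ᗮ := sub_orthProj_mem (M ⊓ Xn n) x
                rw [real_inner_comm]
                exact hxq _ hPw
              have t2 : inner ℝ (x - orthProj (Xn n) x) (orthProj (Xn n) w) = (0 : ℝ) := by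
                rw [real_inner_comm]
                exact hxpx _ (orthProj_mem (Xn n) w)
              rw [t1, t2, sub_zero]
            have e2 : inner ℝ (orthProj (Xn n) x - q) (w - orthProj (Xn n) w) = (0 : ℝ) := by
              exact (sub_orthProj_mem (Xn n) w) _ (Submodule.sub_mem _ hpx hqX)
            rw [e1, e2, add_zero]
  have hC : ∀ x : X, Tendsto (fun n => x - orthProj (Xn n) x) atTop (𝓝 0) := by
    intro x
    have := tendsto_const_nhds (x := x) (f := atTop (α := ℕ)) |>.sub (hproj x)
    simpa using this
  constructor
  · -- (i) ↔ (ii)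
    constructor
    · intro h x
      have := (h x).sub (hC x)
      simp only [key, add_sub_cancel_right] at this
      simpa using this
    · intro h x
      have := (h x).add (hC x)
      simp only [← key] at this
      simpa using this
  · -- (ii) ↔ (iii)
    constructor
    · intro h x
      constructor
      · intro hx
        haveI := hMnp 0
        have hconv : Tendsto (fun n => orthProj (M ⊓ Xn n) x) atTop (𝓝 x) := by
          have := h x
          rwa [orthProj_eq_self M hx] at this
        have hb : Tendsto (fun n => dist x (orthProj (M ⊓ Xn n) x)) atTop (𝓝 0) := by
          have h2 : Tendsto (fun n => dist x (orthProj (M ⊓ Xn n) x)) atTop (𝓝 (dist x x)) :=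
            tendsto_const_nhds.dist hconv
          simpa using h2
        exact squeeze_zero (fun n => Metric.infDist_nonneg)
          (fun n => Metric.infDist_le_dist_of_mem
            (haveI := hMnp n; orthProj_mem (M ⊓ Xn n) x)) hb
      · intro hx
        have hle : ∀ n, Metric.infDist x (M : Set X)
            ≤ Metric.infDist x ((M ⊓ Xn n : Submodule ℝ X) : Set X) := fun n =>
          Metric.infDist_le_infDist_of_subset
            (fun y hy => (Submodule.mem_inf.mp hy).1)
            ⟨0, Submodule.zero_mem _⟩
        have h0 : Metric.infDist x (M : Set X) ≤ 0 :=
          ge_of_tendsto hx (Eventually.of_forall hle)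
        have h0' : Metric.infDist x (M : Set X) = 0 :=
          le_antisymm h0 Metric.infDist_nonneg
        have := ((ContinuousLinearMap.isClosed_ker T).mem_iff_infDist_zero
          ⟨0, Submodule.zero_mem _⟩).2 h0'
        exact this
    · intro h x
      have hu : orthProj M x ∈ M := orthProj_mem M x
      have hv : x - orthProj M x ∈ Mᗮ := sub_orthProj_mem M x
      have hPnu : Tendsto (fun n => orthProj (M ⊓ Xn n) (orthProj M x)) atTop
          (𝓝 (orthProj M x)) := by
        have hd : Tendsto (fun n =>
            Metric.infDist (orthProj M x) ((M ⊓ Xn n : Submodule ℝ X) : Set X))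
            atTop (𝓝 0) := (h (orthProj M x)).1 hu
        have hnorm : ∀ n, ‖orthProj M x - orthProj (M ⊓ Xn n) (orthProj M x)‖
            = Metric.infDist (orthProj M x) ((M ⊓ Xn n : Submodule ℝ X) : Set X) := fun n =>
          haveI := hMnp n
          norm_sub_orthProj_eq_infDist (M ⊓ Xn n) (orthProj M x)
        rw [tendsto_iff_norm_sub_tendsto_zero]
        refine hd.congr fun n => ?_
        rw [← hnorm n, norm_sub_rev]
      have hzero : ∀ n, orthProj (M ⊓ Xn n) (x - orthProj M x) = 0 := fun n =>
        haveI := hMnp n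
        orthProj_eq_zero (M ⊓ Xn n)
          (Submodule.orthogonal_le inf_le_left hv)
      have hdecomp : ∀ n, orthProj (M ⊓ Xn n) x
          = orthProj (M ⊓ Xn n) (orthProj M x) := by
        intro n
        have : x = orthProj M x + (x - orthProj M x) := by abel
        conv_lhs => rw [this]
        rw [map_add, hzero n, add_zero]
      refine hPnu.congr fun n => (hdecomp n).symm
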